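/- (Ergodic bound.) Assume the mean-value hypothesis, τ ∈ (0, (1+√5)/2), and that for some α ∈ (τ/min(1+τ, 1+τ⁻¹), 1]: Σ̂_f + S ⪰ 0, H_f ⪰ 0, (1/2)Σ̂_g + T ⪰ 0 and M_g ≻ 0. Define the ergodic averages x̂^k := (1/k)∑_{i=1}^k x^{i+1}, ŷ^k := (1/k)∑_{i=1}^k y^{i+1}, ẑ^k := (1/k)∑_{i=1}^k z̃^{i+1}. Then for every k ≥ 1 and every (x, y, z) ∈ X × Y × Z: (p(x̂^k) + q(ŷ^k)) − (p(x) + q(y)) + ⟨x̂^k − x, ∇f(x) + A z⟩ + ⟨ŷ^k − y, ∇g(y) + B z⟩ + ⟨ẑ^k − z, −(A*x + B*y − c)⟩ ≤ (φ_1(x,y,z) + (1 − α min(τ, τ⁻¹))σ‖r^1‖² + αξ_1)/(2k), where when p(x) = +∞ or q(y) = +∞ the inequality is understood in the extended reals (it holds trivially). -/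

import Mathlib

open scoped RealInnerProductSpace

section Aux
variable {V : Type*} [NormedAddCommGroup V] [InnerProductSpace ℝ V]

/-- expansion of quadratic form of a difference -/
lemma quad_sub_expand (G : V →ₗ[ℝ] V) (hs : ∀ u v : V, ⟪G u, v⟫ = ⟪u, G v⟫)
    (a b : V) : ⟪a - b, G (a - b)⟫ = ⟪a, G a⟫ - 2 * ⟪a, G b⟫ + ⟪b, G b⟫ := by
  have hba : ⟪b, G a⟫ = ⟪a, G b⟫ := by
    rw [← hs b a, real_inner_comm]
  simp only [map_sub, inner_sub_left, inner_sub_right, hba]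
  ring

/-- polarization identity -/
lemma inner_quad_identity (G : V →ₗ[ℝ] V) (hs : ∀ u v : V, ⟪G u, v⟫ = ⟪u, G v⟫)
    (a b : V) : ⟪a, G b⟫ = (⟪a, G a⟫ + ⟪b, G b⟫ - ⟪a - b, G (a - b)⟫) / 2 := by
  rw [quad_sub_expand G hs a b]; ring

lemma psd_cauchy (G : V →ₗ[ℝ] V) (hs : ∀ u v : V, ⟪G u, v⟫ = ⟪u, G v⟫)
    (hp : ∀ u : V, 0 ≤ ⟪u, G u⟫) (a b : V) :
    ⟪a, G b⟫ ≤ (⟪a, G a⟫ + ⟪b, G b⟫) / 2 := by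
  have := hp (a - b)
  rw [quad_sub_expand G hs a b] at this
  linarith

lemma quad_sub_le (G : V →ₗ[ℝ] V) (hs : ∀ u v : V, ⟪G u, v⟫ = ⟪u, G v⟫)
    (hp : ∀ u : V, 0 ≤ ⟪u, G u⟫) (a b : V) :
    ⟪a - b, G (a - b)⟫ ≤ 2 * ⟪a, G a⟫ + 2 * ⟪b, G b⟫ := by
  have h1 := hp (a + b)
  have h2 : ⟪a + b, G (a + b)⟫ = ⟪a, G a⟫ + 2 * ⟪a, G b⟫ + ⟪b, G b⟫ := by
    have hba : ⟪b, G a⟫ = ⟪a, G b⟫ := by rw [← hs b a, real_inner_comm]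
    simp only [map_add, inner_add_left, inner_add_right, hba]; ring
  rw [quad_sub_expand G hs a b]
  linarith

/-- sandwich lemma: if W ⪰ 0 and 2N - W ⪰ 0 then ⟪a,(N-W)b⟫ ≤ ½(⟪a,Na⟫+⟪b,Nb⟫),
    stated with N given as sum of two maps N₁ + N₂ applied pointwise. -/
lemma sandwich (N W : V →ₗ[ℝ] V)
    (hNs : ∀ u v : V, ⟪N u, v⟫ = ⟪u, N v⟫) (hWs : ∀ u v : V, ⟪W u, v⟫ = ⟪u, W v⟫)
    (hW : ∀ u : V, 0 ≤ ⟪u, W u⟫) (h2 : ∀ u : V, 0 ≤ 2 * ⟪u, N u⟫ - ⟪u, W u⟫)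
    (a b : V) : ⟪a, N b⟫ - ⟪a, W b⟫ ≤ (⟪a, N a⟫ + ⟪b, N b⟫) / 2 := by
  -- 4(⟪a,Mb⟫) = ⟪a+b,M(a+b)⟫ - ⟪a-b,M(a-b)⟫ for symmetric M
  have pol : ∀ (M : V →ₗ[ℝ] V), (∀ u v : V, ⟪M u, v⟫ = ⟪u, M v⟫) →
      4 * ⟪a, M b⟫ = ⟪a + b, M (a + b)⟫ - ⟪a - b, M (a - b)⟫ := by
    intro M hMs
    have hba : ⟪b, M a⟫ = ⟪a, M b⟫ := by rw [← hMs b a, real_inner_comm]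
    simp only [map_add, map_sub, inner_add_left, inner_add_right, inner_sub_left,
      inner_sub_right, hba]
    ring
  have h1 := pol N hNs
  have h2' := pol W hWs
  have e1 : ⟪a + b, N (a + b)⟫ - ⟪a + b, W (a + b)⟫ ≤ ⟪a + b, N (a + b)⟫ := by
    have := hW (a + b); linarith
  have e2 : -(⟪a - b, N (a - b)⟫ - ⟪a - b, W (a - b)⟫) ≤ ⟪a - b, N (a - b)⟫ := by
    have := h2 (a - b); linarith
  have e3 : ⟪a + b, N (a + b)⟫ + ⟪a - b, N (a - b)⟫ = 2 * ⟪a, N a⟫ + 2 * ⟪b, N b⟫ := by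
    have hba : ⟪b, N a⟫ = ⟪a, N b⟫ := by rw [← hNs b a, real_inner_comm]
    simp only [map_add, map_sub, inner_add_left, inner_add_right, inner_sub_left,
      inner_sub_right, hba]
    ring
  linarith

/-- weighted Cauchy: c⟪a,b⟫ ≤ p/2 ‖a‖² + q/2 ‖b‖² when c² ≤ pq. -/
lemma weighted_cauchy (c pp qq : ℝ) (hp : 0 ≤ pp) (hq : 0 ≤ qq) (hc : c ^ 2 ≤ pp * qq)
    (a b : V) : c * ⟪a, b⟫ ≤ pp / 2 * ‖a‖ ^ 2 + qq / 2 * ‖b‖ ^ 2 := by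
  have h1 : |⟪a, b⟫| ≤ ‖a‖ * ‖b‖ := abs_real_inner_le_norm a b
  have h2 : c * ⟪a, b⟫ ≤ |c| * (‖a‖ * ‖b‖) := by
    calc c * ⟪a, b⟫ ≤ |c * ⟪a, b⟫| := le_abs_self _
    _ = |c| * |⟪a, b⟫| := abs_mul _ _
    _ ≤ |c| * (‖a‖ * ‖b‖) := by
        exact mul_le_mul_of_nonneg_left h1 (abs_nonneg c)
  have hna : 0 ≤ ‖a‖ := norm_nonneg a
  have hnb : 0 ≤ ‖b‖ := norm_nonneg b
  have hXnn : 0 ≤ 2 * (|c| * (‖a‖ * ‖b‖)) := by positivity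
  have hYnn : 0 ≤ pp * ‖a‖ ^ 2 + qq * ‖b‖ ^ 2 := by positivity
  have hsq : (2 * (|c| * (‖a‖ * ‖b‖))) ^ 2 ≤ (pp * ‖a‖ ^ 2 + qq * ‖b‖ ^ 2) ^ 2 := by
    nlinarith [sq_nonneg (pp * ‖a‖ ^ 2 - qq * ‖b‖ ^ 2), sq_abs c, sq_nonneg (‖a‖ * ‖b‖),
      mul_nonneg hp hq]
  have key : 2 * (|c| * (‖a‖ * ‖b‖)) ≤ pp * ‖a‖ ^ 2 + qq * ‖b‖ ^ 2 := by
    nlinarith [hsq, hXnn, hYnn]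
  linarith

end Aux

set_option maxHeartbeats 2000000 in
theorem step_key
    {X Y Z : Type*}
    [NormedAddCommGroup X] [InnerProductSpace ℝ X]
    [NormedAddCommGroup Y] [InnerProductSpace ℝ Y]
    [NormedAddCommGroup Z] [InnerProductSpace ℝ Z]
    (A : Z →ₗ[ℝ] X) (Astar : X →ₗ[ℝ] Z)
    (B : Z →ₗ[ℝ] Y) (Bstar : Y →ₗ[ℝ] Z)
    (hA : ∀ (z : Z) (x : X), ⟪A z, x⟫ = ⟪z, Astar x⟫)
    (hB : ∀ (z : Z) (y : Y), ⟪B z, y⟫ = ⟪z, Bstar y⟫)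
    (c : Z) (σ τ : ℝ) (hσ : 0 < σ) (hτ : 0 < τ)
    (f : X → ℝ) (g : Y → ℝ) (f' : X → X) (g' : Y → Y)
    (Sf Sfh S : X →ₗ[ℝ] X) (Sg Sgh T : Y →ₗ[ℝ] Y)
    (hSf_sym : ∀ u v : X, ⟪Sf u, v⟫ = ⟪u, Sf v⟫) (hSf_psd : ∀ u : X, 0 ≤ ⟪u, Sf u⟫)
    (hSfh_sym : ∀ u v : X, ⟪Sfh u, v⟫ = ⟪u, Sfh v⟫)
    (hS_sym : ∀ u v : X, ⟪S u, v⟫ = ⟪u, S v⟫)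
    (hSg_sym : ∀ u v : Y, ⟪Sg u, v⟫ = ⟪u, Sg v⟫) (hSg_psd : ∀ u : Y, 0 ≤ ⟪u, Sg u⟫)
    (hSgh_sym : ∀ u v : Y, ⟪Sgh u, v⟫ = ⟪u, Sgh v⟫)
    (hT_sym : ∀ u v : Y, ⟪T u, v⟫ = ⟪u, T v⟫)
    (hf_low : ∀ x x' : X, f x' + ⟪x - x', f' x'⟫ + (1/2) * ⟪x - x', Sf (x - x')⟫ ≤ f x)
    (hf_up : ∀ x x' : X, f x ≤ f x' + ⟪x - x', f' x'⟫ + (1/2) * ⟪x - x', Sfh (x - x')⟫)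
    (hg_low : ∀ y y' : Y, g y' + ⟪y - y', g' y'⟫ + (1/2) * ⟪y - y', Sg (y - y')⟫ ≤ g y)
    (hg_up : ∀ y y' : Y, g y ≤ g y' + ⟪y - y', g' y'⟫ + (1/2) * ⟪y - y', Sgh (y - y')⟫)
    (xk : ℕ → X) (yk : ℕ → Y) (zk : ℕ → Z)
    (P Q : ℕ → ℝ) (px qy : ℝ) (x : X) (y : Y) (z : Z)
    (α : ℝ) (hα0 : 0 ≤ α) (hα2 : α ≤ 1) (hτα : τ ≤ α * (1 + min τ τ⁻¹))
    (j : ℕ)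
    (hzk2 : zk (j+2) = zk (j+1) + (τ * σ) • (Astar (xk (j+2)) + Bstar (yk (j+2)) - c))
    (hzk1 : zk (j+1) = zk j + (τ * σ) • (Astar (xk (j+1)) + Bstar (yk (j+1)) - c))
    (hx2 : P (j+2) + ⟪(xk (j+2) - x), f' (xk (j+1))
        + A (zk (j+1) + σ • (Astar (xk (j+2)) + Bstar (yk (j+1)) - c))
        + (Sfh (xk (j+2) - xk (j+1)) + S (xk (j+2) - xk (j+1)))⟫ ≤ px)
    (hyy : Q (j+2) + ⟪(yk (j+2) - y), g' (yk (j+1)) + B (zk (j+1) + σ • (Astar (xk (j+2)) + Bstar (yk (j+2)) - c)) + (Sgh (yk (j+2) - yk (j+1)) + T (yk (j+2) - yk (j+1)))⟫ ≤ qy)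
    (hyA : Q (j+2) + ⟪(yk (j+2) - yk (j+1)), g' (yk (j+1)) + B (zk (j+1) + σ • (Astar (xk (j+2)) + Bstar (yk (j+2)) - c)) + (Sgh (yk (j+2) - yk (j+1)) + T (yk (j+2) - yk (j+1)))⟫ ≤ Q (j+1))
    (hyB : Q (j+1) + ⟪yk (j+1) - yk (j+2), g' (yk j) + B (zk j + σ • (Astar (xk (j+1)) + Bstar (yk (j+1)) - c)) + (Sgh (yk (j+1) - yk j) + T (yk (j+1) - yk j))⟫ ≤ Q (j+2))
    (W : Y →ₗ[ℝ] Y)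
    (hW_sym : ∀ u v : Y, ⟪W u, v⟫ = ⟪u, W v⟫) (hW_psd : ∀ u : Y, 0 ≤ ⟪u, W u⟫)
    (hW_le : ∀ u : Y, 0 ≤ ⟪u, Sgh u - W u⟫)
    (hWeq : g' (yk (j+1)) - g' (yk j) = W (yk (j+1) - yk j))
    (hHfq : ∀ u : X, 0 ≤ 1/2 * ⟪u, Sf u⟫ + ⟪u, S u⟫ + 1/2 * (1 - α) * σ * ‖Astar u‖^2)
    (hhalfq : ∀ u : Y, 0 ≤ 1/2 * ⟪u, Sgh u⟫ + ⟪u, T u⟫)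
    (hMgq : ∀ u : Y, 0 ≤ 1/2 * ⟪u, Sg u⟫ + ⟪u, T u⟫ + (min τ (1 + τ - τ ^ 2)) * α * σ * ‖Bstar u‖^2) :
    P (j+2) + Q (j+2) - px - qy + ⟪(xk (j+2) - x), f' x + A z⟫ + ⟪(yk (j+2) - y), g' y + B z⟫
      + ⟪(zk (j+1) + σ • (Astar (xk (j+2)) + Bstar (yk (j+2)) - c)) - z, -(Astar x + Bstar y - c)⟫
    ≤ (((τ*σ)⁻¹ * ‖zk (j+1) - z‖^2 + ⟪(xk (j+1) - x), Sfh (xk (j+1) - x)⟫ + ⟪(xk (j+1) - x), S (xk (j+1) - x)⟫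
        + ⟪(yk (j+1) - y), Sgh (yk (j+1) - y)⟫ + ⟪(yk (j+1) - y), T (yk (j+1) - y)⟫ + σ * ‖(Astar x + Bstar (yk (j+1)) - c)‖^2
        + (1 - α * (min τ τ⁻¹)) * σ * ‖(Astar (xk (j+1)) + Bstar (yk (j+1)) - c)‖^2
        + α * (⟪(yk (j+1) - yk j), Sgh (yk (j+1) - yk j)⟫ + ⟪(yk (j+1) - yk j), T (yk (j+1) - yk j)⟫))
      - ((τ*σ)⁻¹ * ‖zk (j+2) - z‖^2 + ⟪(xk (j+2) - x), Sfh (xk (j+2) - x)⟫ + ⟪(xk (j+2) - x), S (xk (j+2) - x)⟫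
        + ⟪(yk (j+2) - y), Sgh (yk (j+2) - y)⟫ + ⟪(yk (j+2) - y), T (yk (j+2) - y)⟫ + σ * ‖(Astar x + Bstar (yk (j+2)) - c)‖^2
        + (1 - α * (min τ τ⁻¹)) * σ * ‖(Astar (xk (j+2)) + Bstar (yk (j+2)) - c)‖^2
        + α * (⟪(yk (j+2) - yk (j+1)), Sgh (yk (j+2) - yk (j+1))⟫ + ⟪(yk (j+2) - yk (j+1)), T (yk (j+2) - yk (j+1))⟫))) / 2 := by
  have hAI : ∀ (u : Z) (w : X), ⟪w, A u⟫ = ⟪u, Astar w⟫ := fun u w => by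
    rw [real_inner_comm, hA]
  have hBI : ∀ (u : Z) (w : Y), ⟪w, B u⟫ = ⟪u, Bstar w⟫ := fun u w => by
    rw [real_inner_comm, hB]
  -- (F1) x-iterate inequality, rearranged
  have hx1' : P (j+2) + ⟪(xk (j+2) - x), f' (xk (j+1))⟫ + ⟪(xk (j+2) - x), A (zk (j+1) + σ • (Astar (xk (j+2)) + Bstar (yk (j+2)) - c))⟫
      - σ * ⟪(xk (j+2) - x), A (Bstar (yk (j+2) - yk (j+1)))⟫ + ⟪(xk (j+2) - x), Sfh (xk (j+2) - xk (j+1))⟫ + ⟪(xk (j+2) - x), S (xk (j+2) - xk (j+1))⟫ ≤ px := by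
    have harg : zk (j+1) + σ • (Astar (xk (j+2)) + Bstar (yk (j+1)) - c)
        = (zk (j+1) + σ • (Astar (xk (j+2)) + Bstar (yk (j+2)) - c)) - σ • Bstar (yk (j+2) - yk (j+1)) := by
      simp only [map_sub]; module
    rw [harg] at hx2
    have hexp : ⟪(xk (j+2) - x), f' (xk (j+1)) + A ((zk (j+1) + σ • (Astar (xk (j+2)) + Bstar (yk (j+2)) - c)) - σ • Bstar (yk (j+2) - yk (j+1))) + (Sfh (xk (j+2) - xk (j+1)) + S (xk (j+2) - xk (j+1)))⟫
        = ⟪(xk (j+2) - x), f' (xk (j+1))⟫ + ⟪(xk (j+2) - x), A (zk (j+1) + σ • (Astar (xk (j+2)) + Bstar (yk (j+2)) - c))⟫ - σ * ⟪(xk (j+2) - x), A (Bstar (yk (j+2) - yk (j+1)))⟫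
          + (⟪(xk (j+2) - x), Sfh (xk (j+2) - xk (j+1))⟫ + ⟪(xk (j+2) - x), S (xk (j+2) - xk (j+1))⟫) := by
      simp only [map_sub, map_smul, inner_add_right, inner_sub_right, real_inner_smul_right]
      ring
    rw [hexp] at hx2
    linarith
  -- (F2) y-iterate inequality, rearranged
  have hy1' : Q (j+2) + ⟪(yk (j+2) - y), g' (yk (j+1))⟫ + ⟪(yk (j+2) - y), B (zk (j+1) + σ • (Astar (xk (j+2)) + Bstar (yk (j+2)) - c))⟫
      + ⟪(yk (j+2) - y), Sgh (yk (j+2) - yk (j+1))⟫ + ⟪(yk (j+2) - y), T (yk (j+2) - yk (j+1))⟫ ≤ qy := by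
    have hexp : ⟪(yk (j+2) - y), g' (yk (j+1)) + B (zk (j+1) + σ • (Astar (xk (j+2)) + Bstar (yk (j+2)) - c)) + (Sgh (yk (j+2) - yk (j+1)) + T (yk (j+2) - yk (j+1)))⟫
        = ⟪(yk (j+2) - y), g' (yk (j+1))⟫ + ⟪(yk (j+2) - y), B (zk (j+1) + σ • (Astar (xk (j+2)) + Bstar (yk (j+2)) - c))⟫ + (⟪(yk (j+2) - y), Sgh (yk (j+2) - yk (j+1))⟫ + ⟪(yk (j+2) - y), T (yk (j+2) - yk (j+1))⟫) := by
      simp only [inner_add_right]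
    rw [hexp] at hyy
    linarith
  -- (F3) f gradient bound
  have hF : ⟪(xk (j+2) - x), f' x⟫ ≤ ⟪(xk (j+2) - x), f' (xk (j+1))⟫ + ⟪(xk (j+2) - xk (j+1)), Sfh (xk (j+2) - xk (j+1))⟫/2
      - ⟪(xk (j+1) - x), Sf (xk (j+1) - x)⟫/2 - ⟪(xk (j+2) - x), Sf (xk (j+2) - x)⟫/2 := by
    have h1 := hf_up (xk (j+2)) (xk (j+1))
    have h2 := hf_low x (xk (j+1))
    have h3 := hf_low (xk (j+2)) x
    have e1 : ⟪x - xk (j+1), f' (xk (j+1))⟫ = -⟪(xk (j+1) - x), f' (xk (j+1))⟫ := by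
      rw [← inner_neg_left, neg_sub]
    have e2 : ⟪x - xk (j+1), Sf (x - xk (j+1))⟫ = ⟪(xk (j+1) - x), Sf (xk (j+1) - x)⟫ := by
      rw [show x - xk (j+1) = -(xk (j+1) - x) from (neg_sub _ _).symm, map_neg, inner_neg_neg]
    rw [e1, e2] at h2
    have e3 : ⟪(xk (j+2) - x), f' (xk (j+1))⟫ = ⟪(xk (j+2) - xk (j+1)), f' (xk (j+1))⟫ + ⟪(xk (j+1) - x), f' (xk (j+1))⟫ := by
      rw [← inner_add_left]; congr 1; abel
    linarith
  -- (F4) g gradient bound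
  have hG : ⟪(yk (j+2) - y), g' y⟫ ≤ ⟪(yk (j+2) - y), g' (yk (j+1))⟫ + ⟪(yk (j+2) - yk (j+1)), Sgh (yk (j+2) - yk (j+1))⟫/2
      - ⟪(yk (j+1) - y), Sg (yk (j+1) - y)⟫/2 - ⟪(yk (j+2) - y), Sg (yk (j+2) - y)⟫/2 := by
    have h1 := hg_up (yk (j+2)) (yk (j+1))
    have h2 := hg_low y (yk (j+1))
    have h3 := hg_low (yk (j+2)) y
    have e1 : ⟪y - yk (j+1), g' (yk (j+1))⟫ = -⟪(yk (j+1) - y), g' (yk (j+1))⟫ := by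
      rw [← inner_neg_left, neg_sub]
    have e2 : ⟪y - yk (j+1), Sg (y - yk (j+1))⟫ = ⟪(yk (j+1) - y), Sg (yk (j+1) - y)⟫ := by
      rw [show y - yk (j+1) = -(yk (j+1) - y) from (neg_sub _ _).symm, map_neg, inner_neg_neg]
    rw [e1, e2] at h2
    have e3 : ⟪(yk (j+2) - y), g' (yk (j+1))⟫ = ⟪(yk (j+2) - yk (j+1)), g' (yk (j+1))⟫ + ⟪(yk (j+1) - y), g' (yk (j+1))⟫ := by
      rw [← inner_add_left]; congr 1; abel
    linarith
  -- (F5) z linear identity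
  have hzlin : ⟪(xk (j+2) - x), A z⟫ + ⟪(yk (j+2) - y), B z⟫ + ⟪(zk (j+1) + σ • (Astar (xk (j+2)) + Bstar (yk (j+2)) - c)) - z, -(Astar x + Bstar y - c)⟫
      = ⟪(xk (j+2) - x), A (zk (j+1) + σ • (Astar (xk (j+2)) + Bstar (yk (j+2)) - c))⟫ + ⟪(yk (j+2) - y), B (zk (j+1) + σ • (Astar (xk (j+2)) + Bstar (yk (j+2)) - c))⟫ + ⟪z - (zk (j+1) + σ • (Astar (xk (j+2)) + Bstar (yk (j+2)) - c)), (Astar (xk (j+2)) + Bstar (yk (j+2)) - c)⟫ := by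
    have e1 : ⟪(xk (j+2) - x), A z⟫ - ⟪(xk (j+2) - x), A (zk (j+1) + σ • (Astar (xk (j+2)) + Bstar (yk (j+2)) - c))⟫ = ⟪z - (zk (j+1) + σ • (Astar (xk (j+2)) + Bstar (yk (j+2)) - c)), Astar (xk (j+2) - x)⟫ := by
      rw [hAI z, hAI (zk (j+1) + σ • (Astar (xk (j+2)) + Bstar (yk (j+2)) - c)), ← inner_sub_left]
    have e2 : ⟪(yk (j+2) - y), B z⟫ - ⟪(yk (j+2) - y), B (zk (j+1) + σ • (Astar (xk (j+2)) + Bstar (yk (j+2)) - c))⟫ = ⟪z - (zk (j+1) + σ • (Astar (xk (j+2)) + Bstar (yk (j+2)) - c)), Bstar (yk (j+2) - y)⟫ := by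
      rw [hBI z, hBI (zk (j+1) + σ • (Astar (xk (j+2)) + Bstar (yk (j+2)) - c)), ← inner_sub_left]
    have e3 : ⟪(zk (j+1) + σ • (Astar (xk (j+2)) + Bstar (yk (j+2)) - c)) - z, -(Astar x + Bstar y - c)⟫ = ⟪z - (zk (j+1) + σ • (Astar (xk (j+2)) + Bstar (yk (j+2)) - c)), (Astar x + Bstar y - c)⟫ := by
      rw [inner_neg_right, ← inner_neg_left, neg_sub]
    have e4 : ⟪z - (zk (j+1) + σ • (Astar (xk (j+2)) + Bstar (yk (j+2)) - c)), Astar (xk (j+2) - x)⟫ + ⟪z - (zk (j+1) + σ • (Astar (xk (j+2)) + Bstar (yk (j+2)) - c)), Bstar (yk (j+2) - y)⟫ + ⟪z - (zk (j+1) + σ • (Astar (xk (j+2)) + Bstar (yk (j+2)) - c)), (Astar x + Bstar y - c)⟫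
        = ⟪z - (zk (j+1) + σ • (Astar (xk (j+2)) + Bstar (yk (j+2)) - c)), (Astar (xk (j+2)) + Bstar (yk (j+2)) - c)⟫ := by
      rw [← inner_add_right, ← inner_add_right]
      congr 1
      simp only [map_sub]
      abel
    linarith
  -- (F6-F9) quadratic identities
  have q1 : ⟪(xk (j+2) - x), Sfh (xk (j+2) - xk (j+1))⟫ = (⟪(xk (j+2) - x), Sfh (xk (j+2) - x)⟫ + ⟪(xk (j+2) - xk (j+1)), Sfh (xk (j+2) - xk (j+1))⟫ - ⟪(xk (j+1) - x), Sfh (xk (j+1) - x)⟫)/2 := by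
    have h := inner_quad_identity Sfh hSfh_sym (xk (j+2) - x) (xk (j+2) - xk (j+1))
    rw [show (xk (j+2) - x) - (xk (j+2) - xk (j+1)) = (xk (j+1) - x) from by abel] at h
    exact h
  have q2 : ⟪(xk (j+2) - x), S (xk (j+2) - xk (j+1))⟫ = (⟪(xk (j+2) - x), S (xk (j+2) - x)⟫ + ⟪(xk (j+2) - xk (j+1)), S (xk (j+2) - xk (j+1))⟫ - ⟪(xk (j+1) - x), S (xk (j+1) - x)⟫)/2 := by
    have h := inner_quad_identity S hS_sym (xk (j+2) - x) (xk (j+2) - xk (j+1))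
    rw [show (xk (j+2) - x) - (xk (j+2) - xk (j+1)) = (xk (j+1) - x) from by abel] at h
    exact h
  have q3 : ⟪(yk (j+2) - y), Sgh (yk (j+2) - yk (j+1))⟫ = (⟪(yk (j+2) - y), Sgh (yk (j+2) - y)⟫ + ⟪(yk (j+2) - yk (j+1)), Sgh (yk (j+2) - yk (j+1))⟫ - ⟪(yk (j+1) - y), Sgh (yk (j+1) - y)⟫)/2 := by
    have h := inner_quad_identity Sgh hSgh_sym (yk (j+2) - y) (yk (j+2) - yk (j+1))
    rw [show (yk (j+2) - y) - (yk (j+2) - yk (j+1)) = (yk (j+1) - y) from by abel] at h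
    exact h
  have q4 : ⟪(yk (j+2) - y), T (yk (j+2) - yk (j+1))⟫ = (⟪(yk (j+2) - y), T (yk (j+2) - y)⟫ + ⟪(yk (j+2) - yk (j+1)), T (yk (j+2) - yk (j+1))⟫ - ⟪(yk (j+1) - y), T (yk (j+1) - y)⟫)/2 := by
    have h := inner_quad_identity T hT_sym (yk (j+2) - y) (yk (j+2) - yk (j+1))
    rw [show (yk (j+2) - y) - (yk (j+2) - yk (j+1)) = (yk (j+1) - y) from by abel] at h
    exact h
  -- (F10) z quadratic identity
  have hzq : ⟪z - (zk (j+1) + σ • (Astar (xk (j+2)) + Bstar (yk (j+2)) - c)), (Astar (xk (j+2)) + Bstar (yk (j+2)) - c)⟫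
      = (τ*σ)⁻¹ * (‖zk (j+1) - z‖^2 - ‖zk (j+2) - z‖^2)/2 + (τ/2 - 1) * σ * ‖(Astar (xk (j+2)) + Bstar (yk (j+2)) - c)‖^2 := by
    have hts : τ * σ ≠ 0 := by positivity
    have hexp : ‖zk (j+2) - z‖^2
        = ‖zk (j+1) - z‖^2 + 2*(τ*σ)*⟪zk (j+1) - z, (Astar (xk (j+2)) + Bstar (yk (j+2)) - c)⟫ + (τ*σ)^2*‖(Astar (xk (j+2)) + Bstar (yk (j+2)) - c)‖^2 := by
      rw [hzk2, show zk (j+1) + (τ*σ) • (Astar (xk (j+2)) + Bstar (yk (j+2)) - c) - z = (zk (j+1) - z) + (τ*σ) • (Astar (xk (j+2)) + Bstar (yk (j+2)) - c) from by abel,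
        norm_add_sq_real, real_inner_smul_right, norm_smul]
      simp only [Real.norm_eq_abs, mul_pow, sq_abs]
      ring
    have h2 : ⟪z - (zk (j+1) + σ • (Astar (xk (j+2)) + Bstar (yk (j+2)) - c)), (Astar (xk (j+2)) + Bstar (yk (j+2)) - c)⟫ = -⟪zk (j+1) - z, (Astar (xk (j+2)) + Bstar (yk (j+2)) - c)⟫ - σ*‖(Astar (xk (j+2)) + Bstar (yk (j+2)) - c)‖^2 := by
      rw [show z - (zk (j+1) + σ • (Astar (xk (j+2)) + Bstar (yk (j+2)) - c)) = -(zk (j+1) - z) - σ • (Astar (xk (j+2)) + Bstar (yk (j+2)) - c) from by abel, inner_sub_left,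
        inner_neg_left, real_inner_smul_left, real_inner_self_eq_norm_sq]
    rw [h2, hexp]
    field_simp
    ring
  -- (F11) cross term identity
  have hcross : σ * ⟪(xk (j+2) - x), A (Bstar (yk (j+2) - yk (j+1)))⟫
      = σ * ⟪(Astar (xk (j+2)) + Bstar (yk (j+2)) - c), Bstar (yk (j+2) - yk (j+1))⟫ + σ*(‖(Astar x + Bstar (yk (j+1)) - c)‖^2 - ‖(Astar x + Bstar (yk (j+2)) - c)‖^2)/2 - σ/2 * ‖Bstar (yk (j+2) - yk (j+1))‖^2 := by
    have e0 : ⟪(xk (j+2) - x), A (Bstar (yk (j+2) - yk (j+1)))⟫ = ⟪Astar (xk (j+2) - x), Bstar (yk (j+2) - yk (j+1))⟫ := by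
      rw [hAI (Bstar (yk (j+2) - yk (j+1))), real_inner_comm]
    have e1 : Astar (xk (j+2) - x) = (Astar (xk (j+2)) + Bstar (yk (j+2)) - c) - (Astar x + Bstar (yk (j+2)) - c) := by
      simp only [map_sub]; abel
    have e2 : Bstar (yk (j+2) - yk (j+1)) = (Astar x + Bstar (yk (j+2)) - c) - (Astar x + Bstar (yk (j+1)) - c) := by
      simp only [map_sub]; abel
    have e3 : ⟪(Astar x + Bstar (yk (j+2)) - c), (Astar x + Bstar (yk (j+2)) - c) - (Astar x + Bstar (yk (j+1)) - c)⟫ = (‖(Astar x + Bstar (yk (j+2)) - c)‖^2 + ‖(Astar x + Bstar (yk (j+2)) - c) - (Astar x + Bstar (yk (j+1)) - c)‖^2 - ‖(Astar x + Bstar (yk (j+1)) - c)‖^2)/2 := by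
      have h := norm_sub_sq_real (Astar x + Bstar (yk (j+2)) - c) (Astar x + Bstar (yk (j+1)) - c)
      have h2 : ⟪(Astar x + Bstar (yk (j+2)) - c), (Astar x + Bstar (yk (j+2)) - c) - (Astar x + Bstar (yk (j+1)) - c)⟫ = ‖(Astar x + Bstar (yk (j+2)) - c)‖^2 - ⟪(Astar x + Bstar (yk (j+2)) - c), (Astar x + Bstar (yk (j+1)) - c)⟫ := by
        rw [inner_sub_right, real_inner_self_eq_norm_sq]
      linarith
    have e5 : ⟪(xk (j+2) - x), A (Bstar (yk (j+2) - yk (j+1)))⟫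
        = ⟪(Astar (xk (j+2)) + Bstar (yk (j+2)) - c), Bstar (yk (j+2) - yk (j+1))⟫ - (‖(Astar x + Bstar (yk (j+2)) - c)‖^2 + ‖Bstar (yk (j+2) - yk (j+1))‖^2 - ‖(Astar x + Bstar (yk (j+1)) - c)‖^2)/2 := by
      rw [e0, e1, inner_sub_left, show ⟪(Astar x + Bstar (yk (j+2)) - c), Bstar (yk (j+2) - yk (j+1))⟫ = ⟪(Astar x + Bstar (yk (j+2)) - c), (Astar x + Bstar (yk (j+2)) - c) - (Astar x + Bstar (yk (j+1)) - c)⟫ from by rw [e2],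
        e3, ← e2]
    rw [e5]; ring
  -- (F12) sandwich bound
  have hNsym : ∀ u v : Y, ⟪(Sgh + T) u, v⟫ = ⟪u, (Sgh + T) v⟫ := by
    intro u v
    simp only [LinearMap.add_apply, inner_add_left, inner_add_right, hSgh_sym u v, hT_sym u v]
  have h2N : ∀ u : Y, 0 ≤ 2 * ⟪u, (Sgh + T) u⟫ - ⟪u, W u⟫ := by
    intro u
    have h1 := hhalfq u
    have h2 := hW_le u
    simp only [LinearMap.add_apply, inner_add_right, inner_sub_right] at h1 h2 ⊢
    linarith
  have hsand := sandwich (Sgh + T) W hNsym hW_sym hW_psd h2N (yk (j+2) - yk (j+1)) (yk (j+1) - yk j)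
  simp only [LinearMap.add_apply, inner_add_right] at hsand
  -- (F13) the recursive residual bound, multiplied by α
  have hZa : α * (σ * ⟪(Astar (xk (j+2)) + Bstar (yk (j+2)) - c), Bstar (yk (j+2) - yk (j+1))⟫)
      ≤ α * ((1-τ) * σ * ⟪(Astar (xk (j+1)) + Bstar (yk (j+1)) - c), Bstar (yk (j+2) - yk (j+1))⟫
        - (⟪(yk (j+2) - yk (j+1)), Sgh (yk (j+2) - yk (j+1))⟫ + ⟪(yk (j+2) - yk (j+1)), T (yk (j+2) - yk (j+1))⟫)/2 + (⟪(yk (j+1) - yk j), Sgh (yk (j+1) - yk j)⟫ + ⟪(yk (j+1) - yk j), T (yk (j+1) - yk j)⟫)/2) := by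
    refine mul_le_mul_of_nonneg_left ?_ hα0
    have hztd : (zk (j+1) + σ • (Astar (xk (j+2)) + Bstar (yk (j+2)) - c)) - (zk j + σ • (Astar (xk (j+1)) + Bstar (yk (j+1)) - c)) = σ • (Astar (xk (j+2)) + Bstar (yk (j+2)) - c) + (τ*σ - σ) • (Astar (xk (j+1)) + Bstar (yk (j+1)) - c) := by
      rw [hzk1]; module
    have hyA' : Q (j+2) + (⟪(yk (j+2) - yk (j+1)), g' (yk (j+1))⟫ + ⟪(yk (j+2) - yk (j+1)), B (zk (j+1) + σ • (Astar (xk (j+2)) + Bstar (yk (j+2)) - c))⟫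
        + (⟪(yk (j+2) - yk (j+1)), Sgh (yk (j+2) - yk (j+1))⟫ + ⟪(yk (j+2) - yk (j+1)), T (yk (j+2) - yk (j+1))⟫)) ≤ Q (j+1) := by
      have hexp : ⟪(yk (j+2) - yk (j+1)), g' (yk (j+1)) + B (zk (j+1) + σ • (Astar (xk (j+2)) + Bstar (yk (j+2)) - c)) + (Sgh (yk (j+2) - yk (j+1)) + T (yk (j+2) - yk (j+1)))⟫
          = ⟪(yk (j+2) - yk (j+1)), g' (yk (j+1))⟫ + ⟪(yk (j+2) - yk (j+1)), B (zk (j+1) + σ • (Astar (xk (j+2)) + Bstar (yk (j+2)) - c))⟫ + (⟪(yk (j+2) - yk (j+1)), Sgh (yk (j+2) - yk (j+1))⟫ + ⟪(yk (j+2) - yk (j+1)), T (yk (j+2) - yk (j+1))⟫) := by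
        simp only [inner_add_right]
      rw [hexp] at hyA
      linarith
    have hyB' : Q (j+1) - (⟪(yk (j+2) - yk (j+1)), g' (yk j)⟫ + ⟪(yk (j+2) - yk (j+1)), B (zk j + σ • (Astar (xk (j+1)) + Bstar (yk (j+1)) - c))⟫
        + (⟪(yk (j+2) - yk (j+1)), Sgh (yk (j+1) - yk j)⟫ + ⟪(yk (j+2) - yk (j+1)), T (yk (j+1) - yk j)⟫)) ≤ Q (j+2) := by
      have hexp : ⟪yk (j+1) - yk (j+2), g' (yk j) + B (zk j + σ • (Astar (xk (j+1)) + Bstar (yk (j+1)) - c)) + (Sgh (yk (j+1) - yk j) + T (yk (j+1) - yk j))⟫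
          = -(⟪(yk (j+2) - yk (j+1)), g' (yk j)⟫ + ⟪(yk (j+2) - yk (j+1)), B (zk j + σ • (Astar (xk (j+1)) + Bstar (yk (j+1)) - c))⟫
            + (⟪(yk (j+2) - yk (j+1)), Sgh (yk (j+1) - yk j)⟫ + ⟪(yk (j+2) - yk (j+1)), T (yk (j+1) - yk j)⟫)) := by
        rw [show yk (j+1) - yk (j+2) = -(yk (j+2) - yk (j+1)) from (neg_sub _ _).symm, inner_neg_left]
        simp only [inner_add_right]
      rw [hexp] at hyB
      linarith
    have hBd : ⟪(yk (j+2) - yk (j+1)), B (zk (j+1) + σ • (Astar (xk (j+2)) + Bstar (yk (j+2)) - c))⟫ - ⟪(yk (j+2) - yk (j+1)), B (zk j + σ • (Astar (xk (j+1)) + Bstar (yk (j+1)) - c))⟫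
        = σ * ⟪(Astar (xk (j+2)) + Bstar (yk (j+2)) - c), Bstar (yk (j+2) - yk (j+1))⟫ + (τ*σ - σ) * ⟪(Astar (xk (j+1)) + Bstar (yk (j+1)) - c), Bstar (yk (j+2) - yk (j+1))⟫ := by
      rw [hBI (zk (j+1) + σ • (Astar (xk (j+2)) + Bstar (yk (j+2)) - c)), hBI (zk j + σ • (Astar (xk (j+1)) + Bstar (yk (j+1)) - c)), ← inner_sub_left, hztd, inner_add_left,
        real_inner_smul_left, real_inner_smul_left]
    have hgd : ⟪(yk (j+2) - yk (j+1)), g' (yk (j+1))⟫ - ⟪(yk (j+2) - yk (j+1)), g' (yk j)⟫ = ⟪(yk (j+2) - yk (j+1)), W (yk (j+1) - yk j)⟫ := by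
      rw [← inner_sub_right, hWeq]
    linarith
  -- (F14) bound on ‖A* dx‖² combined with residual cross term, times (1-α)σ
  have h11 : (1-α) * σ * (⟪(Astar (xk (j+2)) + Bstar (yk (j+2)) - c), Bstar (yk (j+2) - yk (j+1))⟫ + (1/4)*‖Astar (xk (j+2) - xk (j+1))‖^2)
      ≤ (1-α) * σ * ((1/2)*(‖(Astar (xk (j+2)) + Bstar (yk (j+2)) - c)‖^2 + ‖Bstar (yk (j+2) - yk (j+1))‖^2 + ‖(Astar (xk (j+1)) + Bstar (yk (j+1)) - c)‖^2)) := by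
    refine mul_le_mul_of_nonneg_left ?_ (mul_nonneg (by linarith) hσ.le)
    have hAdx : Astar (xk (j+2) - xk (j+1)) = ((Astar (xk (j+2)) + Bstar (yk (j+2)) - c) - Bstar (yk (j+2) - yk (j+1))) - (Astar (xk (j+1)) + Bstar (yk (j+1)) - c) := by
      simp only [map_sub]; abel
    have hn1 : ‖Astar (xk (j+2) - xk (j+1))‖^2 ≤ 2*‖(Astar (xk (j+2)) + Bstar (yk (j+2)) - c) - Bstar (yk (j+2) - yk (j+1))‖^2 + 2*‖(Astar (xk (j+1)) + Bstar (yk (j+1)) - c)‖^2 := by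
      rw [hAdx]
      have h1 := norm_sub_sq_real ((Astar (xk (j+2)) + Bstar (yk (j+2)) - c) - Bstar (yk (j+2) - yk (j+1))) (Astar (xk (j+1)) + Bstar (yk (j+1)) - c)
      have h2 := norm_add_sq_real ((Astar (xk (j+2)) + Bstar (yk (j+2)) - c) - Bstar (yk (j+2) - yk (j+1))) (Astar (xk (j+1)) + Bstar (yk (j+1)) - c)
      have h3 : (0:ℝ) ≤ ‖((Astar (xk (j+2)) + Bstar (yk (j+2)) - c) - Bstar (yk (j+2) - yk (j+1))) + (Astar (xk (j+1)) + Bstar (yk (j+1)) - c)‖^2 := by positivity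
      linarith
    have hn2 := norm_sub_sq_real (Astar (xk (j+2)) + Bstar (yk (j+2)) - c) (Bstar (yk (j+2) - yk (j+1)))
    linarith
  -- (F15)(F16) curvature drops
  have h12 := hHfq (xk (j+2) - xk (j+1))
  have h13 := hMgq (yk (j+2) - yk (j+1))
  -- (F17) weighted Cauchy, times ασ
  have hinv : τ * τ⁻¹ = 1 := mul_inv_cancel₀ hτ.ne'
  have hcau : α * σ * ((1-τ) * ⟪(Astar (xk (j+1)) + Bstar (yk (j+1)) - c), Bstar (yk (j+2) - yk (j+1))⟫)
      ≤ α * σ * ((1 - min τ τ⁻¹)/2 * ‖(Astar (xk (j+1)) + Bstar (yk (j+1)) - c)‖^2 + (1 - min τ (1 + τ - τ ^ 2))/2 * ‖Bstar (yk (j+2) - yk (j+1))‖^2) := by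
    refine mul_le_mul_of_nonneg_left ?_ (mul_nonneg hα0 hσ.le)
    rcases le_total τ 1 with h | h
    · have hττ : τ ≤ τ⁻¹ := by nlinarith only [hτ, h, hinv]
      have hm1 : min τ τ⁻¹ = τ := min_eq_left hττ
      have hm2 : min τ (1 + τ - τ ^ 2) = τ := min_eq_left (by nlinarith only [hτ, h])
      rw [hm1, hm2]
      exact weighted_cauchy (1-τ) (1-τ) (1-τ) (by linarith) (by linarith)
        (le_of_eq (by ring)) _ _
    · have hττ : τ⁻¹ ≤ τ := by nlinarith only [hτ, h, hinv]
      have hm1 : min τ τ⁻¹ = τ⁻¹ := min_eq_right hττ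
      have hm2 : min τ (1 + τ - τ ^ 2) = 1 + τ - τ^2 := min_eq_right (by nlinarith only [hτ, h])
      rw [hm1, hm2]
      refine weighted_cauchy (1-τ) (1-τ⁻¹) (1-(1+τ-τ^2)) (by nlinarith only [hτ, h, hinv]) (by nlinarith only [hτ, h])
        (le_of_eq (by field_simp; ring)) _ _
  -- (F18) parallelogram drops
  have hpx : ⟪(xk (j+2) - xk (j+1)), Sf (xk (j+2) - xk (j+1))⟫ ≤ 2*⟪(xk (j+2) - x), Sf (xk (j+2) - x)⟫ + 2*⟪(xk (j+1) - x), Sf (xk (j+1) - x)⟫ := by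
    have h := quad_sub_le Sf hSf_sym hSf_psd (xk (j+2) - x) (xk (j+1) - x)
    rw [show (xk (j+2) - x) - (xk (j+1) - x) = (xk (j+2) - xk (j+1)) from by abel] at h
    exact h
  have hpy : ⟪(yk (j+2) - yk (j+1)), Sg (yk (j+2) - yk (j+1))⟫ ≤ 2*⟪(yk (j+2) - y), Sg (yk (j+2) - y)⟫ + 2*⟪(yk (j+1) - y), Sg (yk (j+1) - y)⟫ := by
    have h := quad_sub_le Sg hSg_sym hSg_psd (yk (j+2) - y) (yk (j+1) - y)
    rw [show (yk (j+2) - y) - (yk (j+1) - y) = (yk (j+2) - yk (j+1)) from by abel] at h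
    exact h
  -- (F19) drop of the r^{k+1} coefficient surplus
  have hdrop : 0 ≤ (α * (1 + min τ τ⁻¹) - τ) * (σ/2) * ‖(Astar (xk (j+2)) + Bstar (yk (j+2)) - c)‖^2 :=
    mul_nonneg (mul_nonneg (by linarith) (by positivity)) (by positivity)
  -- final combination
  have hgoalx : ⟪(xk (j+2) - x), f' x + A z⟫ = ⟪(xk (j+2) - x), f' x⟫ + ⟪(xk (j+2) - x), A z⟫ := inner_add_right _ _ _
  have hgoaly : ⟪(yk (j+2) - y), g' y + B z⟫ = ⟪(yk (j+2) - y), g' y⟫ + ⟪(yk (j+2) - y), B z⟫ := inner_add_right _ _ _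
  rw [hgoalx, hgoaly]
  set a01 := ⟪(xk (j+2) - x), f' x⟫ with ha01
  set a02 := ⟪(xk (j+2) - x), f' (xk (j+1))⟫ with ha02
  set a03 := ⟪(xk (j+2) - x), A z⟫ with ha03
  set a04 := ⟪(xk (j+2) - x), A (zk (j+1) + σ • (Astar (xk (j+2)) + Bstar (yk (j+2)) - c))⟫ with ha04
  set a05 := ⟪(xk (j+2) - x), A (Bstar (yk (j+2) - yk (j+1)))⟫ with ha05
  set a06 := ⟪(yk (j+2) - y), g' y⟫ with ha06
  set a07 := ⟪(yk (j+2) - y), g' (yk (j+1))⟫ with ha07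
  set a08 := ⟪(yk (j+2) - y), B z⟫ with ha08
  set a09 := ⟪(yk (j+2) - y), B (zk (j+1) + σ • (Astar (xk (j+2)) + Bstar (yk (j+2)) - c))⟫ with ha09
  set a10 := ⟪(zk (j+1) + σ • (Astar (xk (j+2)) + Bstar (yk (j+2)) - c)) - z, -(Astar x + Bstar y - c)⟫ with ha10
  set a11 := ⟪z - (zk (j+1) + σ • (Astar (xk (j+2)) + Bstar (yk (j+2)) - c)), (Astar (xk (j+2)) + Bstar (yk (j+2)) - c)⟫ with ha11
  set a12 := ⟪(xk (j+2) - x), Sfh (xk (j+2) - xk (j+1))⟫ with ha12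
  set a13 := ⟪(xk (j+2) - x), S (xk (j+2) - xk (j+1))⟫ with ha13
  set a14 := ⟪(yk (j+2) - y), Sgh (yk (j+2) - yk (j+1))⟫ with ha14
  set a15 := ⟪(yk (j+2) - y), T (yk (j+2) - yk (j+1))⟫ with ha15
  set a16 := ⟪(xk (j+2) - x), Sfh (xk (j+2) - x)⟫ with ha16
  set a17 := ⟪(xk (j+2) - xk (j+1)), Sfh (xk (j+2) - xk (j+1))⟫ with ha17
  set a18 := ⟪(xk (j+1) - x), Sfh (xk (j+1) - x)⟫ with ha18
  set a19 := ⟪(xk (j+2) - x), S (xk (j+2) - x)⟫ with ha19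
  set a20 := ⟪(xk (j+2) - xk (j+1)), S (xk (j+2) - xk (j+1))⟫ with ha20
  set a21 := ⟪(xk (j+1) - x), S (xk (j+1) - x)⟫ with ha21
  set a22 := ⟪(xk (j+2) - x), Sf (xk (j+2) - x)⟫ with ha22
  set a23 := ⟪(xk (j+1) - x), Sf (xk (j+1) - x)⟫ with ha23
  set a24 := ⟪(xk (j+2) - xk (j+1)), Sf (xk (j+2) - xk (j+1))⟫ with ha24
  set a25 := ⟪(yk (j+2) - y), Sgh (yk (j+2) - y)⟫ with ha25
  set a26 := ⟪(yk (j+2) - yk (j+1)), Sgh (yk (j+2) - yk (j+1))⟫ with ha26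
  set a27 := ⟪(yk (j+1) - y), Sgh (yk (j+1) - y)⟫ with ha27
  set a28 := ⟪(yk (j+2) - y), T (yk (j+2) - y)⟫ with ha28
  set a29 := ⟪(yk (j+2) - yk (j+1)), T (yk (j+2) - yk (j+1))⟫ with ha29
  set a30 := ⟪(yk (j+1) - y), T (yk (j+1) - y)⟫ with ha30
  set a31 := ⟪(yk (j+2) - y), Sg (yk (j+2) - y)⟫ with ha31
  set a32 := ⟪(yk (j+1) - y), Sg (yk (j+1) - y)⟫ with ha32
  set a33 := ⟪(yk (j+2) - yk (j+1)), Sg (yk (j+2) - yk (j+1))⟫ with ha33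
  set a34 := ⟪(yk (j+1) - yk j), Sgh (yk (j+1) - yk j)⟫ with ha34
  set a35 := ⟪(yk (j+1) - yk j), T (yk (j+1) - yk j)⟫ with ha35
  set a36 := ⟪(Astar (xk (j+2)) + Bstar (yk (j+2)) - c), Bstar (yk (j+2) - yk (j+1))⟫ with ha36
  set a37 := ⟪(Astar (xk (j+1)) + Bstar (yk (j+1)) - c), Bstar (yk (j+2) - yk (j+1))⟫ with ha37
  set n01 := ‖zk (j+1) - z‖^2 with hn01
  set n02 := ‖zk (j+2) - z‖^2 with hn02
  set n03 := ‖(Astar (xk (j+2)) + Bstar (yk (j+2)) - c)‖^2 with hn03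
  set n04 := ‖(Astar (xk (j+1)) + Bstar (yk (j+1)) - c)‖^2 with hn04
  set n05 := ‖(Astar x + Bstar (yk (j+1)) - c)‖^2 with hn05
  set n06 := ‖(Astar x + Bstar (yk (j+2)) - c)‖^2 with hn06
  set n07 := ‖Bstar (yk (j+2) - yk (j+1))‖^2 with hn07
  set n08 := ‖Astar (xk (j+2) - xk (j+1))‖^2 with hn08
  set m01 := min τ τ⁻¹ with hm01
  set m02 := min τ (1 + τ - τ ^ 2) with hm02
  set it0 := (τ*σ)⁻¹ with hit0
  linarith only [hx1', hy1', hF, hG, hzlin, q1, q2, q3, q4, hzq, hcross, hZa, h11, h12, h13,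
    hcau, hpx, hpy, hdrop]

section Jensen
variable {V : Type*} [AddCommGroup V] [Module ℝ V]

lemma ereal_jensen (p : V → EReal)
    (hconv : ∀ (a b : V) (t : ℝ), 0 ≤ t → t ≤ 1 →
      p (t • a + (1 - t) • b) ≤ ((t : ℝ) : EReal) * p a + (((1 - t : ℝ)) : EReal) * p b)
    (hnb : ∀ v, p v ≠ ⊥) (v : ℕ → V) (hv : ∀ i, p (v i) ≠ ⊤) :
    ∀ n : ℕ, 1 ≤ n → p ((n : ℝ)⁻¹ • ∑ i ∈ Finset.Icc 1 n, v i)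
      ≤ ((((n : ℝ)⁻¹ * ∑ i ∈ Finset.Icc 1 n, (p (v i)).toReal : ℝ)) : EReal) := by
  intro n hn
  induction n with
  | zero => omega
  | succ m ih =>
    rcases Nat.eq_or_lt_of_le hn with h1 | h1
    · -- m + 1 = 1
      have hm : m = 0 := by omega
      subst hm
      norm_num [Finset.Icc_self]
      exact le_of_eq (EReal.coe_toReal (hv 1) (hnb (v 1))).symm
    · have hm : 1 ≤ m := by omega
      have ihm := ih hm
      have hmR : (0 : ℝ) < (m : ℝ) := by exact_mod_cast hm
      have hm1R : (0 : ℝ) < ((m : ℝ) + 1) := by linarith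
      set t : ℝ := ((m : ℝ) + 1)⁻¹ with ht
      have ht0 : 0 ≤ t := by positivity
      have ht1 : t ≤ 1 := by
        rw [ht]; rw [inv_le_one_iff₀]; right; linarith
      have hsum : ∑ i ∈ Finset.Icc 1 (m + 1), v i = (∑ i ∈ Finset.Icc 1 m, v i) + v (m + 1) := by
        rw [Finset.sum_Icc_succ_top (by omega)]
      have hmne : (m : ℝ) ≠ 0 := hmR.ne'
      have hm1ne : (m : ℝ) + 1 ≠ 0 := hm1R.ne'
      have hscal : (1 - t) * (m : ℝ)⁻¹ = t := by
        rw [ht]; field_simp; ring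
      have hcomb : ((m + 1 : ℕ) : ℝ)⁻¹ • ∑ i ∈ Finset.Icc 1 (m + 1), v i
          = t • v (m + 1) + (1 - t) • ((m : ℝ)⁻¹ • ∑ i ∈ Finset.Icc 1 m, v i) := by
        rw [hsum, smul_smul, hscal]
        push_cast
        rw [smul_add]
        abel
      rw [hcomb]
      refine le_trans (hconv (v (m + 1)) _ t ht0 ht1) ?_
      have hb : ((1 - t : ℝ) : EReal) * p ((m : ℝ)⁻¹ • ∑ i ∈ Finset.Icc 1 m, v i)
          ≤ ((1 - t : ℝ) : EReal) * (((m : ℝ)⁻¹ * ∑ i ∈ Finset.Icc 1 m, (p (v i)).toReal : ℝ) : EReal) := by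
        apply mul_le_mul_of_nonneg_left ihm
        exact_mod_cast (by linarith : (0:ℝ) ≤ 1 - t)
      have ha : ((t : ℝ) : EReal) * p (v (m + 1))
          = ((t * (p (v (m + 1))).toReal : ℝ) : EReal) := by
        rw [EReal.coe_toReal (hv (m+1)) (hnb (v (m+1))) |>.symm]
        exact (EReal.coe_mul t _).symm
      calc ((t : ℝ) : EReal) * p (v (m + 1)) + ((1 - t : ℝ) : EReal) * p _
          ≤ ((t * (p (v (m + 1))).toReal : ℝ) : EReal)
            + ((1 - t : ℝ) : EReal) * (((m : ℝ)⁻¹ * ∑ i ∈ Finset.Icc 1 m, (p (v i)).toReal : ℝ) : EReal) := by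
            rw [← ha]; exact add_le_add_right hb _
        _ = (((t * (p (v (m + 1))).toReal) + (1 - t) * ((m : ℝ)⁻¹ * ∑ i ∈ Finset.Icc 1 m, (p (v i)).toReal) : ℝ) : EReal) := by
            rw [← EReal.coe_mul, ← EReal.coe_add]
        _ = ((((m + 1 : ℕ) : ℝ)⁻¹ * ∑ i ∈ Finset.Icc 1 (m + 1), (p (v i)).toReal : ℝ) : EReal) := by
            norm_cast
            rw [Finset.sum_Icc_succ_top (by omega : 1 ≤ m + 1)]
            push_cast
            rw [ht]
            field_simp
            ring
end Jensen

lemma tele_sum (g : ℕ → ℝ) : ∀ k : ℕ, 1 ≤ k →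
    ∑ i ∈ Finset.Icc 1 k, (g i - g (i+1)) = g 1 - g (k+1) := by
  intro k hk
  induction k with
  | zero => omega
  | succ m ih =>
    rcases Nat.eq_or_lt_of_le hk with h1 | h1
    · have : m = 0 := by omega
      subst this
      simp [Finset.Icc_self]
    · have hm : 1 ≤ m := by omega
      rw [Finset.sum_Icc_succ_top (by omega : 1 ≤ m + 1), ih hm]
      ring




open scoped RealInnerProductSpace

set_option maxHeartbeats 1000000 in
theorem stmt15
    {X Y Z : Type*}
    [NormedAddCommGroup X] [InnerProductSpace ℝ X] [FiniteDimensional ℝ X]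
    [NormedAddCommGroup Y] [InnerProductSpace ℝ Y] [FiniteDimensional ℝ Y]
    [NormedAddCommGroup Z] [InnerProductSpace ℝ Z] [FiniteDimensional ℝ Z]
    (A : Z →ₗ[ℝ] X) (Astar : X →ₗ[ℝ] Z)
    (B : Z →ₗ[ℝ] Y) (Bstar : Y →ₗ[ℝ] Z)
    (hA : ∀ (z : Z) (x : X), ⟪A z, x⟫ = ⟪z, Astar x⟫)
    (hB : ∀ (z : Z) (y : Y), ⟪B z, y⟫ = ⟪z, Bstar y⟫)
    (c : Z) (σ τ : ℝ) (hσ : 0 < σ) (hτ : 0 < τ)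
    (p : X → EReal) (q : Y → EReal)
    (hp_proper : ∃ x, p x ≠ ⊤) (hp_nebot : ∀ x, p x ≠ ⊥)
    (hq_proper : ∃ y, q y ≠ ⊤) (hq_nebot : ∀ y, q y ≠ ⊥)
    (hp_convex : ∀ (x x' : X) (t : ℝ), 0 ≤ t → t ≤ 1 →
      p (t • x + (1 - t) • x') ≤ ((t : ℝ) : EReal) * p x + (((1 - t : ℝ)) : EReal) * p x')
    (hq_convex : ∀ (y y' : Y) (t : ℝ), 0 ≤ t → t ≤ 1 →
      q (t • y + (1 - t) • y') ≤ ((t : ℝ) : EReal) * q y + (((1 - t : ℝ)) : EReal) * q y')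
    (f : X → ℝ) (g : Y → ℝ) (f' : X → X) (g' : Y → Y)
    (hf : ∀ x, HasGradientAt f (f' x) x) (hg : ∀ y, HasGradientAt g (g' y) y)
    (hfc : ConvexOn ℝ Set.univ f) (hgc : ConvexOn ℝ Set.univ g)
    (Sf Sfh S : X →ₗ[ℝ] X) (Sg Sgh T : Y →ₗ[ℝ] Y)
    (hSf_sym : ∀ u v : X, ⟪Sf u, v⟫ = ⟪u, Sf v⟫) (hSf_psd : ∀ u : X, 0 ≤ ⟪u, Sf u⟫)
    (hSfh_sym : ∀ u v : X, ⟪Sfh u, v⟫ = ⟪u, Sfh v⟫) (hSfh_psd : ∀ u : X, 0 ≤ ⟪u, Sfh u⟫)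
    (hSfh_ge : ∀ u : X, ⟪u, Sf u⟫ ≤ ⟪u, Sfh u⟫)
    (hS_sym : ∀ u v : X, ⟪S u, v⟫ = ⟪u, S v⟫)
    (hSg_sym : ∀ u v : Y, ⟪Sg u, v⟫ = ⟪u, Sg v⟫) (hSg_psd : ∀ u : Y, 0 ≤ ⟪u, Sg u⟫)
    (hSgh_sym : ∀ u v : Y, ⟪Sgh u, v⟫ = ⟪u, Sgh v⟫) (hSgh_psd : ∀ u : Y, 0 ≤ ⟪u, Sgh u⟫)
    (hSgh_ge : ∀ u : Y, ⟪u, Sg u⟫ ≤ ⟪u, Sgh u⟫)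
    (hT_sym : ∀ u v : Y, ⟪T u, v⟫ = ⟪u, T v⟫)
    (hf_low : ∀ x x' : X, f x' + ⟪x - x', f' x'⟫ + (1/2) * ⟪x - x', Sf (x - x')⟫ ≤ f x)
    (hf_up : ∀ x x' : X, f x ≤ f x' + ⟪x - x', f' x'⟫ + (1/2) * ⟪x - x', Sfh (x - x')⟫)
    (hg_low : ∀ y y' : Y, g y' + ⟪y - y', g' y'⟫ + (1/2) * ⟪y - y', Sg (y - y')⟫ ≤ g y)
    (hg_up : ∀ y y' : Y, g y ≤ g y' + ⟪y - y', g' y'⟫ + (1/2) * ⟪y - y', Sgh (y - y')⟫)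
    (xk : ℕ → X) (yk : ℕ → Y) (zk : ℕ → Z)
    (hxdom : ∀ k, p (xk k) ≠ ⊤) (hydom : ∀ k, q (yk k) ≠ ⊤)
    (hiter_x : ∀ (k : ℕ) (x : X),
      p (xk (k + 1)) + ((⟪xk (k + 1) - x, f' (xk k)
        + A (zk k + σ • (Astar (xk (k + 1)) + Bstar (yk k) - c))
        + (Sfh (xk (k + 1) - xk k) + S (xk (k + 1) - xk k))⟫ : ℝ) : EReal) ≤ p x)
    (hiter_y : ∀ (k : ℕ) (y : Y),
      q (yk (k + 1)) + ((⟪yk (k + 1) - y, g' (yk k)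
        + B (zk k + σ • (Astar (xk (k + 1)) + Bstar (yk (k + 1)) - c))
        + (Sgh (yk (k + 1) - yk k) + T (yk (k + 1) - yk k))⟫ : ℝ) : EReal) ≤ q y)
    (hiter_z : ∀ k : ℕ, zk (k + 1) = zk k + (τ * σ) • (Astar (xk (k + 1)) + Bstar (yk (k + 1)) - c))

    (hMV : ∀ k : ℕ, 1 ≤ k → ∃ W : Y →ₗ[ℝ] Y,
      (∀ u v : Y, ⟪W u, v⟫ = ⟪u, W v⟫) ∧ (∀ u : Y, 0 ≤ ⟪u, W u⟫) ∧
      (∀ u : Y, 0 ≤ ⟪u, Sgh u - W u⟫) ∧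
      g' (yk k) - g' (yk (k - 1)) = W (yk k - yk (k - 1)))

    (hτub : τ < (1 + Real.sqrt 5) / 2)
    (α : ℝ) (hα1 : τ / min (1 + τ) (1 + τ⁻¹) < α) (hα2 : α ≤ 1)

    (hfsS : ∀ u : X, 0 ≤ ⟪u, Sfh u + S u⟫)
    (hHf : ∀ u : X, 0 ≤ ⟪u, (1/2 : ℝ) • Sf u + S u + ((1/2) * (1 - α) * σ) • A (Astar u)⟫)
    (hhalf : ∀ u : Y, 0 ≤ ⟪u, (1/2 : ℝ) • Sgh u + T u⟫)
    (hMg : ∀ u : Y, u ≠ 0 →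
      0 < ⟪u, (1/2 : ℝ) • Sg u + T u + (min τ (1 + τ - τ ^ 2) * α * σ) • B (Bstar u)⟫) :
    ∀ k : ℕ, 1 ≤ k → ∀ (x : X) (y : Y) (z : Z),
      (p ((k : ℝ)⁻¹ • ∑ i ∈ Finset.Icc 1 k, xk (i + 1)) + q ((k : ℝ)⁻¹ • ∑ i ∈ Finset.Icc 1 k, yk (i + 1))) - (p x + q y)
        + ((⟪((k : ℝ)⁻¹ • ∑ i ∈ Finset.Icc 1 k, xk (i + 1)) - x, f' x + A z⟫ + ⟪((k : ℝ)⁻¹ • ∑ i ∈ Finset.Icc 1 k, yk (i + 1)) - y, g' y + B z⟫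
            + ⟪((k : ℝ)⁻¹ • ∑ i ∈ Finset.Icc 1 k, (zk i + σ • (Astar (xk (i + 1)) + Bstar (yk (i + 1)) - c))) - z, -(Astar x + Bstar y - c)⟫ : ℝ) : EReal)
      ≤ (((((τ * σ)⁻¹ * ‖zk 1 - z‖ ^ 2 + ⟪xk 1 - x, Sfh (xk 1 - x) + S (xk 1 - x)⟫ + ⟪yk 1 - y, Sgh (yk 1 - y) + T (yk 1 - y)⟫ + σ * ‖Astar x + Bstar (yk 1) - c‖ ^ 2) + (1 - α * min τ τ⁻¹) * σ * ‖Astar (xk 1) + Bstar (yk 1) - c‖ ^ 2 + α * ⟪yk 1 - yk 0, Sgh (yk 1 - yk 0) + T (yk 1 - yk 0)⟫) / (2 * (k : ℝ)) : ℝ) : EReal) := by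
  -- scalar preliminaries
  have hinv : τ * τ⁻¹ = 1 := mul_inv_cancel₀ hτ.ne'
  have hm'pos : 0 < min τ τ⁻¹ := lt_min hτ (inv_pos.2 hτ)
  have hmin_eq : min (1 + τ) (1 + τ⁻¹) = 1 + min τ τ⁻¹ := by
    rcases le_total τ τ⁻¹ with h | h
    · rw [min_eq_left (by linarith), min_eq_left h]
    · rw [min_eq_right (by linarith), min_eq_right h]
  have hminpos : 0 < 1 + min τ τ⁻¹ := by linarith
  have hα1' : τ < α * (1 + min τ τ⁻¹) := by
    rw [hmin_eq] at hα1
    exact (div_lt_iff₀ hminpos).mp hα1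
  have hτα : τ ≤ α * (1 + min τ τ⁻¹) := le_of_lt hα1'
  have hα0 : 0 ≤ α := by
    have h0 : 0 < τ / min (1 + τ) (1 + τ⁻¹) := div_pos hτ (by rw [hmin_eq]; exact hminpos)
    linarith
  have hm'le : min τ τ⁻¹ ≤ 1 := by
    rcases le_total τ 1 with h | h
    · exact le_trans (min_le_left _ _) h
    · refine le_trans (min_le_right _ _) ?_
      nlinarith only [hτ, h, hinv]
  have hαm : α * min τ τ⁻¹ ≤ 1 := mul_le_one₀ hα2 hm'pos.le hm'le
  -- quadratic-form versions of the operator hypotheses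
  have hHfq : ∀ u : X, 0 ≤ 1/2 * ⟪u, Sf u⟫ + ⟪u, S u⟫ + 1/2 * (1 - α) * σ * ‖Astar u‖^2 := by
    intro u
    have h := hHf u
    have hAA : ⟪u, A (Astar u)⟫ = ‖Astar u‖^2 := by
      rw [real_inner_comm, hA, real_inner_self_eq_norm_sq]
    simp only [inner_add_right, real_inner_smul_right] at h
    rw [hAA] at h
    linarith
  have hhalfq : ∀ u : Y, 0 ≤ 1/2 * ⟪u, Sgh u⟫ + ⟪u, T u⟫ := by
    intro u
    have h := hhalf u
    simp only [inner_add_right, real_inner_smul_right] at h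
    linarith
  have hMgq : ∀ u : Y, 0 ≤ 1/2 * ⟪u, Sg u⟫ + ⟪u, T u⟫ + (min τ (1 + τ - τ ^ 2)) * α * σ * ‖Bstar u‖^2 := by
    intro u
    rcases eq_or_ne u 0 with rfl | hu
    · simp
    · have h := le_of_lt (hMg u hu)
      have hBB : ⟪u, B (Bstar u)⟫ = ‖Bstar u‖^2 := by
        rw [real_inner_comm, hB, real_inner_self_eq_norm_sq]
      simp only [inner_add_right, real_inner_smul_right] at h
      rw [hBB] at h
      linarith
  have hfsSq : ∀ u : X, 0 ≤ ⟪u, Sfh u⟫ + ⟪u, S u⟫ := by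
    intro u
    have h := hfsS u
    simp only [inner_add_right] at h
    linarith
  have hghTq : ∀ u : Y, 0 ≤ ⟪u, Sgh u⟫ + ⟪u, T u⟫ := by
    intro u
    have h1 := hhalfq u
    have h2 := hSgh_psd u
    linarith
  -- real-valued reformulations of the iterate inequalities
  intro k hk x y z
  have hpreal : ∀ i : ℕ, p (xk i) = (((p (xk i)).toReal : ℝ) : EReal) :=
    fun i => (EReal.coe_toReal (hxdom i) (hp_nebot _)).symm
  have hqreal : ∀ i : ℕ, q (yk i) = (((q (yk i)).toReal : ℝ) : EReal) :=
    fun i => (EReal.coe_toReal (hydom i) (hq_nebot _)).symm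
  have hx_real : ∀ (i : ℕ) (x' : X) (px' : ℝ), p x' = (px' : EReal) →
      (p (xk (i+1))).toReal + ⟪xk (i+1) - x', f' (xk i)
        + A (zk i + σ • (Astar (xk (i+1)) + Bstar (yk i) - c))
        + (Sfh (xk (i+1) - xk i) + S (xk (i+1) - xk i))⟫ ≤ px' := by
    intro i x' px' hx'
    have h := hiter_x i x'
    rw [hx', hpreal (i+1), ← EReal.coe_add, EReal.coe_le_coe_iff] at h
    exact h
  have hy_real : ∀ (i : ℕ) (y' : Y) (qy' : ℝ), q y' = (qy' : EReal) →
      (q (yk (i+1))).toReal + ⟪yk (i+1) - y', g' (yk i)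
        + B (zk i + σ • (Astar (xk (i+1)) + Bstar (yk (i+1)) - c))
        + (Sgh (yk (i+1) - yk i) + T (yk (i+1) - yk i))⟫ ≤ qy' := by
    intro i y' qy' hy'
    have h := hiter_y i y'
    rw [hy', hqreal (i+1), ← EReal.coe_add, EReal.coe_le_coe_iff] at h
    exact h
  -- dispatch the degenerate cases
  by_cases hpx : p x = ⊤
  · have htop : p x + q y = ⊤ := by rw [hpx]; exact EReal.top_add_of_ne_bot (hq_nebot y)
    rw [htop, EReal.sub_top, EReal.bot_add]
    exact bot_le
  by_cases hqy : q y = ⊤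
  · have htop : p x + q y = ⊤ := by rw [hqy]; exact EReal.add_top_of_ne_bot (hp_nebot x)
    rw [htop, EReal.sub_top, EReal.bot_add]
    exact bot_le
  have hpx' : p x = (((p x).toReal : ℝ) : EReal) := (EReal.coe_toReal hpx (hp_nebot x)).symm
  have hqy' : q y = (((q y).toReal : ℝ) : EReal) := (EReal.coe_toReal hqy (hq_nebot y)).symm
  set Φ : ℕ → ℝ := fun i => (τ*σ)⁻¹ * ‖zk i - z‖^2 + ⟪xk i - x, Sfh (xk i - x)⟫ + ⟪xk i - x, S (xk i - x)⟫
      + ⟪yk i - y, Sgh (yk i - y)⟫ + ⟪yk i - y, T (yk i - y)⟫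
      + σ * ‖Astar x + Bstar (yk i) - c‖^2
      + (1 - α * min τ τ⁻¹) * σ * ‖Astar (xk i) + Bstar (yk i) - c‖^2
      + α * (⟪yk i - yk (i-1), Sgh (yk i - yk (i-1))⟫ + ⟪yk i - yk (i-1), T (yk i - yk (i-1))⟫) with hΦdef
  have hkpos : (0:ℝ) < (k : ℝ) := by exact_mod_cast hk
  have hkne : (k:ℝ) ≠ 0 := hkpos.ne'
  -- the per-step descent inequality
  have key : ∀ j : ℕ, (p (xk (j+2))).toReal + (q (yk (j+2))).toReal - (p x).toReal - (q y).toReal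
      + ⟪xk (j+2) - x, f' x + A z⟫ + ⟪yk (j+2) - y, g' y + B z⟫
      + ⟪(zk (j+1) + σ • (Astar (xk (j+2)) + Bstar (yk (j+2)) - c)) - z, -(Astar x + Bstar y - c)⟫
      ≤ (Φ (j+1) - Φ (j+2)) / 2 := by
    intro j
    obtain ⟨W, hW_sym, hW_psd, hW_le, hWeq⟩ := hMV (j+1) (by omega)
    exact step_key A Astar B Bstar hA hB c σ τ hσ hτ f g f' g' Sf Sfh S Sg Sgh T
      hSf_sym hSf_psd hSfh_sym hS_sym hSg_sym hSg_psd hSgh_sym hT_sym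
      hf_low hf_up hg_low hg_up xk yk zk (fun i => (p (xk i)).toReal) (fun i => (q (yk i)).toReal)
      ((p x).toReal) ((q y).toReal) x y z α hα0 hα2 hτα j (hiter_z (j+1)) (hiter_z j)
      (hx_real (j+1) x _ hpx') (hy_real (j+1) y _ hqy')
      (hy_real (j+1) (yk (j+1)) _ (hqreal (j+1))) (hy_real j (yk (j+2)) _ (hqreal (j+2)))
      W hW_sym hW_psd hW_le hWeq hHfq hhalfq hMgq
  -- sum the per-step inequalities
  have hsum : ∑ i ∈ Finset.Icc 1 k, ((p (xk (i+1))).toReal + (q (yk (i+1))).toReal - (p x).toReal - (q y).toReal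
      + ⟪xk (i+1) - x, f' x + A z⟫ + ⟪yk (i+1) - y, g' y + B z⟫
      + ⟪(zk i + σ • (Astar (xk (i+1)) + Bstar (yk (i+1)) - c)) - z, -(Astar x + Bstar y - c)⟫)
      ≤ (Φ 1 - Φ (k+1)) / 2 := by
    have h1 : ∀ i ∈ Finset.Icc 1 k, ((p (xk (i+1))).toReal + (q (yk (i+1))).toReal - (p x).toReal - (q y).toReal
      + ⟪xk (i+1) - x, f' x + A z⟫ + ⟪yk (i+1) - y, g' y + B z⟫
      + ⟪(zk i + σ • (Astar (xk (i+1)) + Bstar (yk (i+1)) - c)) - z, -(Astar x + Bstar y - c)⟫) ≤ (Φ i - Φ (i+1)) / 2 := by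
      intro i hi
      have hi1 : 1 ≤ i := (Finset.mem_Icc.mp hi).1
      cases i with
      | zero => omega
      | succ j => exact key j
    calc ∑ i ∈ Finset.Icc 1 k, ((p (xk (i+1))).toReal + (q (yk (i+1))).toReal - (p x).toReal - (q y).toReal
      + ⟪xk (i+1) - x, f' x + A z⟫ + ⟪yk (i+1) - y, g' y + B z⟫
      + ⟪(zk i + σ • (Astar (xk (i+1)) + Bstar (yk (i+1)) - c)) - z, -(Astar x + Bstar y - c)⟫) ≤ ∑ i ∈ Finset.Icc 1 k, (Φ i - Φ (i+1)) / 2 :=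
          Finset.sum_le_sum h1
      _ = (∑ i ∈ Finset.Icc 1 k, (Φ i - Φ (i+1))) / 2 := by rw [← Finset.sum_div]
      _ = (Φ 1 - Φ (k+1)) / 2 := by rw [tele_sum Φ k hk]
  -- nonnegativity of Φ (k+1)
  have hΦpos : 0 ≤ Φ (k+1) := by
    have t1 : (0:ℝ) ≤ (τ*σ)⁻¹ * ‖zk (k+1) - z‖^2 :=
      mul_nonneg (inv_nonneg.2 (mul_pos hτ hσ).le) (sq_nonneg _)
    have t2 := hfsSq (xk (k+1) - x)
    have t3 := hghTq (yk (k+1) - y)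
    have t4 : (0:ℝ) ≤ σ * ‖Astar x + Bstar (yk (k+1)) - c‖^2 := mul_nonneg hσ.le (sq_nonneg _)
    have t5 : (0:ℝ) ≤ (1 - α * min τ τ⁻¹) * σ * ‖Astar (xk (k+1)) + Bstar (yk (k+1)) - c‖^2 :=
      mul_nonneg (mul_nonneg (by linarith) hσ.le) (sq_nonneg _)
    have t6 : (0:ℝ) ≤ α * (⟪yk (k+1) - yk ((k+1)-1), Sgh (yk (k+1) - yk ((k+1)-1))⟫
        + ⟪yk (k+1) - yk ((k+1)-1), T (yk (k+1) - yk ((k+1)-1))⟫) := mul_nonneg hα0 (hghTq _)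
    rw [hΦdef]
    simp only
    linarith
  -- averaging identities for the linear terms
  have hcard : (Finset.Icc 1 k).card = k := by rw [Nat.card_Icc]; omega
  have havgx : ((k : ℝ)⁻¹ • ∑ i ∈ Finset.Icc 1 k, xk (i + 1)) - x
      = (k : ℝ)⁻¹ • ∑ i ∈ Finset.Icc 1 k, (xk (i + 1) - x) := by
    rw [Finset.sum_sub_distrib, Finset.sum_const, hcard, smul_sub,
      ← Nat.cast_smul_eq_nsmul ℝ k x, smul_smul, inv_mul_cancel₀ hkne, one_smul]
  have havgy : ((k : ℝ)⁻¹ • ∑ i ∈ Finset.Icc 1 k, yk (i + 1)) - y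
      = (k : ℝ)⁻¹ • ∑ i ∈ Finset.Icc 1 k, (yk (i + 1) - y) := by
    rw [Finset.sum_sub_distrib, Finset.sum_const, hcard, smul_sub,
      ← Nat.cast_smul_eq_nsmul ℝ k y, smul_smul, inv_mul_cancel₀ hkne, one_smul]
  have havgz : ((k : ℝ)⁻¹ • ∑ i ∈ Finset.Icc 1 k, (zk i + σ • (Astar (xk (i + 1)) + Bstar (yk (i + 1)) - c))) - z
      = (k : ℝ)⁻¹ • ∑ i ∈ Finset.Icc 1 k, ((zk i + σ • (Astar (xk (i + 1)) + Bstar (yk (i + 1)) - c)) - z) := by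
    rw [Finset.sum_sub_distrib, Finset.sum_const, hcard, smul_sub,
      ← Nat.cast_smul_eq_nsmul ℝ k z, smul_smul, inv_mul_cancel₀ hkne, one_smul]
  have hlinx : ⟪((k : ℝ)⁻¹ • ∑ i ∈ Finset.Icc 1 k, xk (i + 1)) - x, f' x + A z⟫ = (k:ℝ)⁻¹ * ∑ i ∈ Finset.Icc 1 k, ⟪xk (i+1) - x, f' x + A z⟫ := by
    rw [havgx, real_inner_smul_left, sum_inner]
  have hliny : ⟪((k : ℝ)⁻¹ • ∑ i ∈ Finset.Icc 1 k, yk (i + 1)) - y, g' y + B z⟫ = (k:ℝ)⁻¹ * ∑ i ∈ Finset.Icc 1 k, ⟪yk (i+1) - y, g' y + B z⟫ := by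
    rw [havgy, real_inner_smul_left, sum_inner]
  have hlinz : ⟪((k : ℝ)⁻¹ • ∑ i ∈ Finset.Icc 1 k, (zk i + σ • (Astar (xk (i + 1)) + Bstar (yk (i + 1)) - c))) - z, -(Astar x + Bstar y - c)⟫ = (k:ℝ)⁻¹ * ∑ i ∈ Finset.Icc 1 k, ⟪(zk i + σ • (Astar (xk (i + 1)) + Bstar (yk (i + 1)) - c)) - z, -(Astar x + Bstar y - c)⟫ := by
    rw [havgz, real_inner_smul_left, sum_inner]
  -- Jensen for p and q
  have hJx : p ((k : ℝ)⁻¹ • ∑ i ∈ Finset.Icc 1 k, xk (i + 1))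
      ≤ ((((k : ℝ)⁻¹ * ∑ i ∈ Finset.Icc 1 k, (p (xk (i+1))).toReal : ℝ)) : EReal) :=
    ereal_jensen p hp_convex hp_nebot (fun i => xk (i+1)) (fun i => hxdom (i+1)) k hk
  have hJy : q ((k : ℝ)⁻¹ • ∑ i ∈ Finset.Icc 1 k, yk (i + 1))
      ≤ ((((k : ℝ)⁻¹ * ∑ i ∈ Finset.Icc 1 k, (q (yk (i+1))).toReal : ℝ)) : EReal) :=
    ereal_jensen q hq_convex hq_nebot (fun i => yk (i+1)) (fun i => hydom (i+1)) k hk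
  -- the final real inequality
  have hRHSeq : ((τ * σ)⁻¹ * ‖zk 1 - z‖ ^ 2 + ⟪xk 1 - x, Sfh (xk 1 - x) + S (xk 1 - x)⟫ + ⟪yk 1 - y, Sgh (yk 1 - y) + T (yk 1 - y)⟫ + σ * ‖Astar x + Bstar (yk 1) - c‖ ^ 2) + (1 - α * min τ τ⁻¹) * σ * ‖Astar (xk 1) + Bstar (yk 1) - c‖ ^ 2 + α * ⟪yk 1 - yk 0, Sgh (yk 1 - yk 0) + T (yk 1 - yk 0)⟫ = Φ 1 := by
    rw [hΦdef]
    simp only [Nat.sub_self, inner_add_right]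
    ring
  clear_value Φ
  have hrealfinal : ((k : ℝ)⁻¹ * ∑ i ∈ Finset.Icc 1 k, (p (xk (i+1))).toReal)
        + ((k : ℝ)⁻¹ * ∑ i ∈ Finset.Icc 1 k, (q (yk (i+1))).toReal)
        - ((p x).toReal + (q y).toReal)
        + (⟪((k : ℝ)⁻¹ • ∑ i ∈ Finset.Icc 1 k, xk (i + 1)) - x, f' x + A z⟫ + ⟪((k : ℝ)⁻¹ • ∑ i ∈ Finset.Icc 1 k, yk (i + 1)) - y, g' y + B z⟫ + ⟪((k : ℝ)⁻¹ • ∑ i ∈ Finset.Icc 1 k, (zk i + σ • (Astar (xk (i + 1)) + Bstar (yk (i + 1)) - c))) - z, -(Astar x + Bstar y - c)⟫)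
      ≤ (((τ * σ)⁻¹ * ‖zk 1 - z‖ ^ 2 + ⟪xk 1 - x, Sfh (xk 1 - x) + S (xk 1 - x)⟫ + ⟪yk 1 - y, Sgh (yk 1 - y) + T (yk 1 - y)⟫ + σ * ‖Astar x + Bstar (yk 1) - c‖ ^ 2) + (1 - α * min τ τ⁻¹) * σ * ‖Astar (xk 1) + Bstar (yk 1) - c‖ ^ 2 + α * ⟪yk 1 - yk 0, Sgh (yk 1 - yk 0) + T (yk 1 - yk 0)⟫) / (2 * (k : ℝ)) := by
    have hs2 : ∑ i ∈ Finset.Icc 1 k, ((p (xk (i+1))).toReal + (q (yk (i+1))).toReal - (p x).toReal - (q y).toReal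
      + ⟪xk (i+1) - x, f' x + A z⟫ + ⟪yk (i+1) - y, g' y + B z⟫
      + ⟪(zk i + σ • (Astar (xk (i+1)) + Bstar (yk (i+1)) - c)) - z, -(Astar x + Bstar y - c)⟫) ≤ Φ 1 / 2 := le_trans hsum (by linarith only [hΦpos])
    have hsplit : ∑ i ∈ Finset.Icc 1 k, ((p (xk (i+1))).toReal + (q (yk (i+1))).toReal - (p x).toReal - (q y).toReal
      + ⟪xk (i+1) - x, f' x + A z⟫ + ⟪yk (i+1) - y, g' y + B z⟫
      + ⟪(zk i + σ • (Astar (xk (i+1)) + Bstar (yk (i+1)) - c)) - z, -(Astar x + Bstar y - c)⟫)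
        = (∑ i ∈ Finset.Icc 1 k, (p (xk (i+1))).toReal) + (∑ i ∈ Finset.Icc 1 k, (q (yk (i+1))).toReal)
          - (k:ℝ) * (p x).toReal - (k:ℝ) * (q y).toReal
          + (∑ i ∈ Finset.Icc 1 k, ⟪xk (i+1) - x, f' x + A z⟫)
          + (∑ i ∈ Finset.Icc 1 k, ⟪yk (i+1) - y, g' y + B z⟫)
          + (∑ i ∈ Finset.Icc 1 k, ⟪(zk i + σ • (Astar (xk (i + 1)) + Bstar (yk (i + 1)) - c)) - z, -(Astar x + Bstar y - c)⟫) := by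
      simp only [Finset.sum_add_distrib, Finset.sum_sub_distrib, Finset.sum_const, hcard,
        nsmul_eq_mul]
    rw [hsplit] at hs2
    have h5 := mul_le_mul_of_nonneg_left hs2 (inv_nonneg.2 hkpos.le)
    rw [hlinx, hliny, hlinz, hRHSeq]
    have hdiv : (k:ℝ)⁻¹ * (Φ 1 / 2) = Φ 1 / (2 * (k:ℝ)) := by
      rw [div_mul_eq_div_div_swap, div_div]
      ring
    rw [hdiv] at h5
    have heq : (k:ℝ)⁻¹ * ((∑ i ∈ Finset.Icc 1 k, (p (xk (i+1))).toReal) + (∑ i ∈ Finset.Icc 1 k, (q (yk (i+1))).toReal)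
          - (k:ℝ) * (p x).toReal - (k:ℝ) * (q y).toReal
          + (∑ i ∈ Finset.Icc 1 k, ⟪xk (i+1) - x, f' x + A z⟫)
          + (∑ i ∈ Finset.Icc 1 k, ⟪yk (i+1) - y, g' y + B z⟫)
          + (∑ i ∈ Finset.Icc 1 k, ⟪(zk i + σ • (Astar (xk (i + 1)) + Bstar (yk (i + 1)) - c)) - z, -(Astar x + Bstar y - c)⟫))
        = ((k : ℝ)⁻¹ * ∑ i ∈ Finset.Icc 1 k, (p (xk (i+1))).toReal)
          + ((k : ℝ)⁻¹ * ∑ i ∈ Finset.Icc 1 k, (q (yk (i+1))).toReal)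
          - ((p x).toReal + (q y).toReal)
          + (((k:ℝ)⁻¹ * ∑ i ∈ Finset.Icc 1 k, ⟪xk (i+1) - x, f' x + A z⟫)
            + ((k:ℝ)⁻¹ * ∑ i ∈ Finset.Icc 1 k, ⟪yk (i+1) - y, g' y + B z⟫)
            + ((k:ℝ)⁻¹ * ∑ i ∈ Finset.Icc 1 k, ⟪(zk i + σ • (Astar (xk (i + 1)) + Bstar (yk (i + 1)) - c)) - z, -(Astar x + Bstar y - c)⟫)) := by
      field_simp
      ring
    rw [heq] at h5
    exact h5
  -- assemble in EReal
  rw [hpx', hqy', ← EReal.coe_add]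
  have hstep1 : p ((k : ℝ)⁻¹ • ∑ i ∈ Finset.Icc 1 k, xk (i + 1))
        + q ((k : ℝ)⁻¹ • ∑ i ∈ Finset.Icc 1 k, yk (i + 1))
      ≤ ((((k : ℝ)⁻¹ * ∑ i ∈ Finset.Icc 1 k, (p (xk (i+1))).toReal)
        + ((k : ℝ)⁻¹ * ∑ i ∈ Finset.Icc 1 k, (q (yk (i+1))).toReal) : ℝ) : EReal) := by
    refine le_trans (add_le_add hJx hJy) (le_of_eq ?_)
    rw [← EReal.coe_add]
  calc p ((k : ℝ)⁻¹ • ∑ i ∈ Finset.Icc 1 k, xk (i + 1))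
        + q ((k : ℝ)⁻¹ • ∑ i ∈ Finset.Icc 1 k, yk (i + 1))
        - (((p x).toReal + (q y).toReal : ℝ) : EReal)
        + ((⟪((k : ℝ)⁻¹ • ∑ i ∈ Finset.Icc 1 k, xk (i + 1)) - x, f' x + A z⟫ + ⟪((k : ℝ)⁻¹ • ∑ i ∈ Finset.Icc 1 k, yk (i + 1)) - y, g' y + B z⟫ + ⟪((k : ℝ)⁻¹ • ∑ i ∈ Finset.Icc 1 k, (zk i + σ • (Astar (xk (i + 1)) + Bstar (yk (i + 1)) - c))) - z, -(Astar x + Bstar y - c)⟫ : ℝ) : EReal)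
      ≤ ((((k : ℝ)⁻¹ * ∑ i ∈ Finset.Icc 1 k, (p (xk (i+1))).toReal)
          + ((k : ℝ)⁻¹ * ∑ i ∈ Finset.Icc 1 k, (q (yk (i+1))).toReal) : ℝ) : EReal)
        - (((p x).toReal + (q y).toReal : ℝ) : EReal)
        + ((⟪((k : ℝ)⁻¹ • ∑ i ∈ Finset.Icc 1 k, xk (i + 1)) - x, f' x + A z⟫ + ⟪((k : ℝ)⁻¹ • ∑ i ∈ Finset.Icc 1 k, yk (i + 1)) - y, g' y + B z⟫ + ⟪((k : ℝ)⁻¹ • ∑ i ∈ Finset.Icc 1 k, (zk i + σ • (Astar (xk (i + 1)) + Bstar (yk (i + 1)) - c))) - z, -(Astar x + Bstar y - c)⟫ : ℝ) : EReal) := by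
        rw [sub_eq_add_neg, sub_eq_add_neg]
        exact add_le_add_left (add_le_add_left hstep1 _) _
    _ = ((((k : ℝ)⁻¹ * ∑ i ∈ Finset.Icc 1 k, (p (xk (i+1))).toReal)
          + ((k : ℝ)⁻¹ * ∑ i ∈ Finset.Icc 1 k, (q (yk (i+1))).toReal)
          - ((p x).toReal + (q y).toReal)
          + (⟪((k : ℝ)⁻¹ • ∑ i ∈ Finset.Icc 1 k, xk (i + 1)) - x, f' x + A z⟫ + ⟪((k : ℝ)⁻¹ • ∑ i ∈ Finset.Icc 1 k, yk (i + 1)) - y, g' y + B z⟫ + ⟪((k : ℝ)⁻¹ • ∑ i ∈ Finset.Icc 1 k, (zk i + σ • (Astar (xk (i + 1)) + Bstar (yk (i + 1)) - c))) - z, -(Astar x + Bstar y - c)⟫) : ℝ) : EReal) := by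
        rw [← EReal.coe_sub, ← EReal.coe_add]
    _ ≤ (((((τ * σ)⁻¹ * ‖zk 1 - z‖ ^ 2 + ⟪xk 1 - x, Sfh (xk 1 - x) + S (xk 1 - x)⟫ + ⟪yk 1 - y, Sgh (yk 1 - y) + T (yk 1 - y)⟫ + σ * ‖Astar x + Bstar (yk 1) - c‖ ^ 2) + (1 - α * min τ τ⁻¹) * σ * ‖Astar (xk 1) + Bstar (yk 1) - c‖ ^ 2 + α * ⟪yk 1 - yk 0, Sgh (yk 1 - yk 0) + T (yk 1 - yk 0)⟫) / (2 * (k : ℝ)) : ℝ) : EReal) := EReal.coe_le_coe_iff.2 hrealfinal
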